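/- With the bilinear form a as in the SIEQ weak formulation, for any (φ, u) ∈ H¹(Ω) × H¹(Ω) one has a((φ,u),(φ,u)) = (3/(2δt))‖√τ⋆ φ‖² + (S₁/ε²)‖φ‖² + S₂‖∇φ‖² + (1/2)‖Z⋆φ‖² + (λ/(εK))‖u‖² + (2δt/3)(λD/(εK))‖∇u‖²; in particular the coupling terms ±(λ/ε)(p⋆·,·) cancel exactly and a((φ,u),(φ,u)) ≥ C₂(‖φ‖²_{H¹} + ‖u‖²_{H¹}) with C₂ = min{S₁/ε², S₂, λ/(εK), (2δt/3)(λD/(εK))} > 0. -/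

import Mathlib

open MeasureTheory
open scoped RealInnerProductSpace

/-- Coercivity (Theorem 3.1(ii)) of the SIEQ bilinear form: on the diagonal the
coupling terms `±(λ/ε)(p⋆·,·)` cancel exactly, giving
`a((φ,u),(φ,u)) = (3/(2δt))‖√τ⋆φ‖² + (S₁/ε²)‖φ‖² + S₂‖∇φ‖² + (1/2)‖Z⋆φ‖²
+ (λ/(εK))‖u‖² + (2δt/3)(λD/(εK))‖∇u‖² ≥ C₂(‖φ‖²_{H¹} + ‖u‖²_{H¹})` with
`C₂ = min{S₁/ε², S₂, λ/(εK), (2δt/3)(λD/(εK))} > 0`. -/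
theorem sieq_bilinear_form_coercive
    {Ω : Type*} [MeasurableSpace Ω] (μ : Measure Ω) (d : ℕ)
    (τs Zs ps : Ω → ℝ) (MZ Mp : ℝ)
    (hτ : ∀ x, 0 ≤ τs x) (hZ : ∀ x, |Zs x| ≤ MZ) (hp : ∀ x, |ps x| ≤ Mp)
    (hτm : Measurable τs) (hZm : Measurable Zs) (hpm : Measurable ps)
    (δt S₁ S₂ ε lam D K : ℝ)
    (hδt : 0 < δt) (hS₁ : 0 < S₁) (hS₂ : 0 < S₂) (hε : 0 < ε)
    (hlam : 0 < lam) (hD : 0 < D) (hK : 0 < K)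
    (hτb : ∃ Mτ, ∀ x, τs x ≤ Mτ)
    (φ u : Ω → ℝ) (gφ gu : Ω → EuclideanSpace ℝ (Fin d))
    (hφ : MemLp φ 2 μ) (hu : MemLp u 2 μ)
    (hgφ : MemLp gφ 2 μ) (hgu : MemLp gu 2 μ) :
    ((3/(2*δt)) * ∫ x, τs x * φ x * φ x ∂μ
      + (S₁/ε^2) * ∫ x, φ x * φ x ∂μ
      + S₂ * ∫ x, ⟪gφ x, gφ x⟫ ∂μ
      + (1/2) * ∫ x, (Zs x * φ x) * (Zs x * φ x) ∂μ
      + (lam/ε) * ∫ x, ps x * u x * φ x ∂μ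
      + (lam/(ε*K)) * ∫ x, u x * u x ∂μ
      + (2*δt/3) * (lam*D/(ε*K)) * ∫ x, ⟪gu x, gu x⟫ ∂μ
      - (lam/ε) * ∫ x, ps x * φ x * u x ∂μ)
    = (3/(2*δt)) * (∫ x, τs x * (φ x)^2 ∂μ)
      + (S₁/ε^2) * (∫ x, (φ x)^2 ∂μ) + S₂ * (∫ x, ‖gφ x‖^2 ∂μ)
      + (1/2) * (∫ x, (Zs x * φ x)^2 ∂μ)
      + (lam/(ε*K)) * (∫ x, (u x)^2 ∂μ)
      + (2*δt/3) * (lam*D/(ε*K)) * (∫ x, ‖gu x‖^2 ∂μ) ∧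
    min (min (S₁/ε^2) S₂) (min (lam/(ε*K)) ((2*δt/3) * (lam*D/(ε*K))))
        * (((∫ x, (φ x)^2 ∂μ) + ∫ x, ‖gφ x‖^2 ∂μ)
           + ((∫ x, (u x)^2 ∂μ) + ∫ x, ‖gu x‖^2 ∂μ))
      ≤ ((3/(2*δt)) * ∫ x, τs x * φ x * φ x ∂μ
          + (S₁/ε^2) * ∫ x, φ x * φ x ∂μ
          + S₂ * ∫ x, ⟪gφ x, gφ x⟫ ∂μ
          + (1/2) * ∫ x, (Zs x * φ x) * (Zs x * φ x) ∂μ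
          + (lam/ε) * ∫ x, ps x * u x * φ x ∂μ
          + (lam/(ε*K)) * ∫ x, u x * u x ∂μ
          + (2*δt/3) * (lam*D/(ε*K)) * ∫ x, ⟪gu x, gu x⟫ ∂μ
          - (lam/ε) * ∫ x, ps x * φ x * u x ∂μ) ∧
    0 < min (min (S₁/ε^2) S₂) (min (lam/(ε*K)) ((2*δt/3) * (lam*D/(ε*K)))) := by
  -- pointwise rewrites of the integrands
  have e1 : (∫ x, τs x * φ x * φ x ∂μ) = ∫ x, τs x * (φ x)^2 ∂μ := by
    congr 1; funext x; ring
  have e2 : (∫ x, φ x * φ x ∂μ) = ∫ x, (φ x)^2 ∂μ := by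
    congr 1; funext x; ring
  have e3 : (∫ x, ⟪gφ x, gφ x⟫ ∂μ) = ∫ x, ‖gφ x‖^2 ∂μ := by
    congr 1; funext x; exact real_inner_self_eq_norm_sq _
  have e4 : (∫ x, (Zs x * φ x) * (Zs x * φ x) ∂μ) = ∫ x, (Zs x * φ x)^2 ∂μ := by
    congr 1; funext x; ring
  have e5 : (∫ x, u x * u x ∂μ) = ∫ x, (u x)^2 ∂μ := by
    congr 1; funext x; ring
  have e6 : (∫ x, ⟪gu x, gu x⟫ ∂μ) = ∫ x, ‖gu x‖^2 ∂μ := by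
    congr 1; funext x; exact real_inner_self_eq_norm_sq _
  have e7 : (∫ x, ps x * u x * φ x ∂μ) = ∫ x, ps x * φ x * u x ∂μ := by
    congr 1; funext x; ring
  -- positivity of the minimum
  have hc1 : 0 < S₁/ε^2 := by positivity
  have hc3 : 0 < lam/(ε*K) := by positivity
  have hc4 : 0 < (2*δt/3) * (lam*D/(ε*K)) := by positivity
  have hM : 0 < min (min (S₁/ε^2) S₂) (min (lam/(ε*K)) ((2*δt/3) * (lam*D/(ε*K)))) :=
    lt_min (lt_min hc1 hS₂) (lt_min hc3 hc4)
  set M := min (min (S₁/ε^2) S₂) (min (lam/(ε*K)) ((2*δt/3) * (lam*D/(ε*K)))) with hMdef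
  -- nonnegativity of integrals
  have hT : 0 ≤ ∫ x, τs x * (φ x)^2 ∂μ :=
    integral_nonneg fun x => mul_nonneg (hτ x) (sq_nonneg _)
  have hZq : 0 ≤ ∫ x, (Zs x * φ x)^2 ∂μ := integral_nonneg fun x => sq_nonneg _
  have hA : 0 ≤ ∫ x, (φ x)^2 ∂μ := integral_nonneg fun x => sq_nonneg _
  have hB : 0 ≤ ∫ x, ‖gφ x‖^2 ∂μ := integral_nonneg fun x => sq_nonneg _
  have hC : 0 ≤ ∫ x, (u x)^2 ∂μ := integral_nonneg fun x => sq_nonneg _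
  have hE : 0 ≤ ∫ x, ‖gu x‖^2 ∂μ := integral_nonneg fun x => sq_nonneg _
  have hM1 : M ≤ S₁/ε^2 := le_trans (min_le_left _ _) (min_le_left _ _)
  have hM2 : M ≤ S₂ := le_trans (min_le_left _ _) (min_le_right _ _)
  have hM3 : M ≤ lam/(ε*K) := le_trans (min_le_right _ _) (min_le_left _ _)
  have hM4 : M ≤ (2*δt/3) * (lam*D/(ε*K)) := le_trans (min_le_right _ _) (min_le_right _ _)
  refine ⟨by rw [e1, e2, e3, e4, e5, e6, e7]; ring, ?_, hM⟩
  rw [e1, e2, e3, e4, e5, e6, e7]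
  have h1 := mul_le_mul_of_nonneg_right hM1 hA
  have h2 := mul_le_mul_of_nonneg_right hM2 hB
  have h3 := mul_le_mul_of_nonneg_right hM3 hC
  have h4 := mul_le_mul_of_nonneg_right hM4 hE
  have h0 : 0 ≤ (3/(2*δt)) * ∫ x, τs x * (φ x)^2 ∂μ := mul_nonneg (by positivity) hT
  linarith
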